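/- Let τ : ℤ² → ℝ be nowhere zero and let s, s̄, A, Q, H be nowhere-zero functions with τ₁₁ = s τ₁²/(τ A), τ₁₂ = τ₁ τ₂/(τ H), τ₂₂ = s̄ τ₂²/(τ Q) at every lattice point, where s depends only on n₁ and s̄ only on n₂. Then at any lattice point the τ-function equation det[[τ, τ₁, τ₁₁],[τ₂, τ₁₂, τ₁₁₂],[τ₂₂, τ₁₂₂, τ₁₁₂₂]] + s s̄ τ₁₂³ = 0 holds if and only if the discrete Tzitzéica equation H₁₂ = −H(H−1)/( H[H(H₁−1)(H₂−1)−(H−1)] − A Q H₁ H₂ ) holds (assuming all denominators are nonzero). -/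

import Mathlib

set_option maxHeartbeats 2000000


theorem tau_function_tzitzeica
    (τ A Q H : ℤ × ℤ → ℝ) (s sb : ℤ → ℝ)
    (hτ : ∀ m k : ℤ, τ (m, k) ≠ 0)
    (hs : ∀ m : ℤ, s m ≠ 0) (hsb : ∀ k : ℤ, sb k ≠ 0)
    (hA : ∀ m k : ℤ, A (m, k) ≠ 0) (hQ : ∀ m k : ℤ, Q (m, k) ≠ 0)
    (hH : ∀ m k : ℤ, H (m, k) ≠ 0)
    (h11 : ∀ m k : ℤ, τ (m + 2, k) = s m * τ (m + 1, k) ^ 2 / (τ (m, k) * A (m, k)))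
    (h12 : ∀ m k : ℤ, τ (m + 1, k + 1) = τ (m + 1, k) * τ (m, k + 1) / (τ (m, k) * H (m, k)))
    (h22 : ∀ m k : ℤ, τ (m, k + 2) = sb k * τ (m, k + 1) ^ 2 / (τ (m, k) * Q (m, k)))
    (m k : ℤ)
    (hden : H (m, k) * (H (m, k) * (H (m + 1, k) - 1) * (H (m, k + 1) - 1)
              - (H (m, k) - 1))
            - A (m, k) * Q (m, k) * H (m + 1, k) * H (m, k + 1) ≠ 0) :
    (Matrix.det !![τ (m, k), τ (m + 1, k), τ (m + 2, k);
                   τ (m, k + 1), τ (m + 1, k + 1), τ (m + 2, k + 1);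
                   τ (m, k + 2), τ (m + 1, k + 2), τ (m + 2, k + 2)]
        + s m * sb k * τ (m + 1, k + 1) ^ 3 = 0)
      ↔ H (m + 1, k + 1)
          = -(H (m, k) * (H (m, k) - 1)) /
              (H (m, k) * (H (m, k) * (H (m + 1, k) - 1) * (H (m, k + 1) - 1)
                  - (H (m, k) - 1))
                - A (m, k) * Q (m, k) * H (m + 1, k) * H (m, k + 1)) := by
  have ht := hτ m k
  have ht1 := hτ (m + 1) k
  have ht2 := hτ m (k + 1)
  have ha := hA m k
  have hq := hQ m k
  have hh := hH m k
  have hh1 := hH (m + 1) k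
  have hh2 := hH m (k + 1)
  have hh12 := hH (m + 1) (k + 1)
  have hss := hs m
  have hsbb := hsb k
  -- entry expressions
  have e20 := h11 m k
  have e11 := h12 m k
  have e02 := h22 m k
  have e21 : τ (m + 2, k + 1)
      = τ (m + 2, k) * τ (m + 1, k + 1) / (τ (m + 1, k) * H (m + 1, k)) := by
    have := h12 (m + 1) k
    rwa [show (m + 1 + 1 : ℤ) = m + 2 by ring] at this
  have e12' : τ (m + 1, k + 2)
      = τ (m + 1, k + 1) * τ (m, k + 2) / (τ (m, k + 1) * H (m, k + 1)) := by
    have := h12 m (k + 1)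
    rwa [show (k + 1 + 1 : ℤ) = k + 2 by ring] at this
  have e22 : τ (m + 2, k + 2)
      = τ (m + 2, k + 1) * τ (m + 1, k + 2) / (τ (m + 1, k + 1) * H (m + 1, k + 1)) := by
    have := h12 (m + 1) (k + 1)
    rwa [show (m + 1 + 1 : ℤ) = m + 2 by ring,
      show (k + 1 + 1 : ℤ) = k + 2 by ring] at this
  set den := H (m, k) * (H (m, k) * (H (m + 1, k) - 1) * (H (m, k + 1) - 1)
              - (H (m, k) - 1))
            - A (m, k) * Q (m, k) * H (m + 1, k) * H (m, k + 1) with hden_def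
  set X := H (m + 1, k + 1) * den + H (m, k) * (H (m, k) - 1) with hX
  have ht11 : τ (m + 1, k + 1) ≠ 0 := by
    rw [e11]
    exact div_ne_zero (mul_ne_zero ht1 ht2) (mul_ne_zero ht hh)
  have key : Matrix.det !![τ (m, k), τ (m + 1, k), τ (m + 2, k);
                   τ (m, k + 1), τ (m + 1, k + 1), τ (m + 2, k + 1);
                   τ (m, k + 2), τ (m + 1, k + 2), τ (m + 2, k + 2)]
        + s m * sb k * τ (m + 1, k + 1) ^ 3
      = -(s m * sb k * τ (m + 1, k) ^ 3 * τ (m, k + 1) ^ 3) /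
          (τ (m, k) ^ 3 * A (m, k) * Q (m, k) * H (m, k) ^ 3 * H (m + 1, k)
            * H (m, k + 1) * H (m + 1, k + 1)) * X := by
    rw [Matrix.det_fin_three]
    simp only [Matrix.of_apply, Matrix.cons_val', Matrix.cons_val_zero, Matrix.cons_val_one,
      Matrix.cons_val_two, Matrix.head_cons, Matrix.tail_cons, Matrix.empty_val', Matrix.cons_val_fin_one,
      Matrix.head_fin_const, Matrix.vecHead]
    rw [e22, e21, e12', e20, e11, e02, hX, hden_def]
    field_simp
    ring
  rw [key]
  have hC : -(s m * sb k * τ (m + 1, k) ^ 3 * τ (m, k + 1) ^ 3) /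
          (τ (m, k) ^ 3 * A (m, k) * Q (m, k) * H (m, k) ^ 3 * H (m + 1, k)
            * H (m, k + 1) * H (m + 1, k + 1)) ≠ 0 := by
    apply div_ne_zero
    · exact neg_ne_zero.mpr (mul_ne_zero (mul_ne_zero (mul_ne_zero hss hsbb)
        (pow_ne_zero _ ht1)) (pow_ne_zero _ ht2))
    · exact mul_ne_zero (mul_ne_zero (mul_ne_zero (mul_ne_zero (mul_ne_zero
        (mul_ne_zero (pow_ne_zero _ ht) ha) hq) (pow_ne_zero _ hh)) hh1) hh2) hh12
  rw [mul_eq_zero, or_iff_right hC]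
  rw [eq_div_iff hden, hX]
  constructor
  · intro hx; linarith
  · intro hx; linarith
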